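/- There exist a constant c > 0 and an integer N such that for all n ≥ N, the diameter of the swap graph 𝒢_n is at least c·n/ln(n). In particular, the diameter of 𝒢_n is Ω(n/ln n). -/

import Mathlib

/-- A sequence of length `n`: a function `ℕ → ℤ` injective on positions `1,…,n`. -/
def IsSeq (n : ℕ) (x : ℕ → ℤ) : Prop := Set.InjOn x (Set.Icc 1 n)

/-- Parent-distance table: `fwdPD x i = i - max{ j | 1 ≤ j < i, x j < x i }` if such `j`
exists, `0` otherwise. -/
def fwdPD (x : ℕ → ℤ) (i : ℕ) : ℕ :=
  if h : ((Finset.Ico 1 i).filter (fun j => x j < x i)).Nonempty then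
    i - ((Finset.Ico 1 i).filter (fun j => x j < x i)).max' h
  else 0

/-- Reverse parent-distance table: `revPD n x i = min{ j | i < j ≤ n, x j < x i } - i` if
such `j` exists, `0` otherwise. -/
def revPD (n : ℕ) (x : ℕ → ℤ) (i : ℕ) : ℕ :=
  if h : ((Finset.Ioc i n).filter (fun j => x j < x i)).Nonempty then
    ((Finset.Ioc i n).filter (fun j => x j < x i)).min' h - i
  else 0

/-- The swap `τ(x,i)`: exchanges positions `i` and `i+1`. -/
def swapSeq (x : ℕ → ℤ) (i : ℕ) : ℕ → ℤ :=
  fun j => if j = i then x (i + 1) else if j = i + 1 then x i else x j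

/-- The parent-distance table of a sequence of length `n`, as a function on `Fin n`
(position `k : Fin n` corresponds to index `k+1 ∈ {1,…,n}`). -/
def PDvec (n : ℕ) (x : ℕ → ℤ) : Fin n → ℕ := fun k => fwdPD x (k.1 + 1)

/-- `NGat n x i` is the set of parent-distance tables obtained by a swap at position `i`
(`1 ≤ i ≤ n-1`) from some sequence `z` having the same Cartesian tree (i.e. the same
parent-distance table) as `x`; it is empty for `i` out of range. -/
def NGat (n : ℕ) (x : ℕ → ℤ) (i : ℕ) : Set (Fin n → ℕ) :=
  {P | 1 ≤ i ∧ i + 1 ≤ n ∧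
    ∃ z, IsSeq n z ∧ PDvec n z = PDvec n x ∧ P = PDvec n (swapSeq z i)}

/-- The neighborhood of (the Cartesian tree of) `x` in the swap graph. -/
def NG (n : ℕ) (x : ℕ → ℤ) : Set (Fin n → ℕ) := ⋃ i, NGat n x i

/-- The set of parent-distance tables of sequences of length `n`
(in one-to-one correspondence with Cartesian trees of size `n`). -/
def PDTables (n : ℕ) : Set (Fin n → ℕ) := {P | ∃ x, IsSeq n x ∧ PDvec n x = P}

/-- The swap graph `𝒢ₙ`: vertices are parent-distance tables of sequences of length `n`,
two distinct tables being adjacent iff one is obtained from the other by a swap. -/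
def swapGraph (n : ℕ) : SimpleGraph (PDTables n) :=
  SimpleGraph.fromRel (fun P Q => ∃ x i, IsSeq n x ∧ 1 ≤ i ∧ i + 1 ≤ n ∧
    PDvec n x = P.1 ∧ PDvec n (swapSeq x i) = Q.1)

-- swapSeq as composition with transposition
lemma swapSeq_eq (x : ℕ → ℤ) (i : ℕ) :
    swapSeq x i = fun k => x (Equiv.swap i (i+1) k) := by
  funext k
  simp only [swapSeq, Equiv.swap_apply_def]
  split_ifs <;> rfl

lemma fwdPD_lt (x : ℕ → ℤ) (p : ℕ) (hp : 1 ≤ p) : fwdPD x p < p := by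
  unfold fwdPD
  split_ifs with h
  · have h1 : 1 ≤ ((Finset.Ico 1 p).filter (fun j => x j < x p)).max' h := by
      have := ((Finset.Ico 1 p).filter (fun j => x j < x p)).max'_mem h
      simp only [Finset.mem_filter, Finset.mem_Ico] at this
      exact this.1.1
    omega
  · omega

-- positions left of i are unaffected
lemma fwdPD_swap_left (x : ℕ → ℤ) (i p : ℕ) (hp : p < i) :
    fwdPD (swapSeq x i) p = fwdPD x p := by
  have hfun : ∀ j, j < i → swapSeq x i j = x j := by
    intro j hj; simp only [swapSeq]; rw [if_neg (by omega), if_neg (by omega)]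
  unfold fwdPD
  have : (Finset.Ico 1 p).filter (fun j => swapSeq x i j < swapSeq x i p)
      = (Finset.Ico 1 p).filter (fun j => x j < x p) := by
    apply Finset.filter_congr
    intro j hj
    simp only [Finset.mem_Ico] at hj
    rw [hfun j (by omega), hfun p hp]
  rw [this]

-- the trichotomy for positions right of i+1
lemma fwdPD_swap_right (x : ℕ → ℤ) (i p : ℕ) (hi : 1 ≤ i) (hp : i + 1 < p) :
    fwdPD (swapSeq x i) p = fwdPD x p ∨
    (fwdPD x p = p - i ∧ fwdPD (swapSeq x i) p = p - (i+1)) ∨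
    (fwdPD x p = p - (i+1) ∧ fwdPD (swapSeq x i) p = p - i) := by
  classical
  set σ := Equiv.swap i (i+1) with hσ
  set S := (Finset.Ico 1 p).filter (fun j => x j < x p) with hS
  set T := (Finset.Ico 1 p).filter (fun j => swapSeq x i j < swapSeq x i p) with hT
  have hσval : ∀ k, σ k = if k = i then i+1 else if k = i+1 then i else k := by
    intro k; rw [hσ, Equiv.swap_apply_def]
  have hyp : swapSeq x i p = x p := by
    simp only [swapSeq]; rw [if_neg (by omega), if_neg (by omega)]
  have hyk : ∀ k, swapSeq x i k = x (σ k) := by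
    intro k; rw [swapSeq_eq]
  have hmem : ∀ k, k ∈ T ↔ σ k ∈ S := by
    intro k
    simp only [hT, hS, Finset.mem_filter, Finset.mem_Ico]
    rw [hyk k, hyp]
    constructor
    · rintro ⟨⟨h1, h2⟩, h3⟩
      refine ⟨⟨?_, ?_⟩, h3⟩ <;> (rw [hσval]; split_ifs <;> omega)
    · rintro ⟨⟨h1, h2⟩, h3⟩
      rw [hσval] at h1 h2
      refine ⟨⟨?_, ?_⟩, h3⟩ <;> (split_ifs at h1 h2 <;> omega)
  have hσσ : ∀ k, σ (σ k) = k := fun k => Equiv.swap_apply_self _ _ k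
  have hne : T.Nonempty ↔ S.Nonempty := by
    constructor
    · rintro ⟨k, hk⟩; exact ⟨σ k, (hmem k).mp hk⟩
    · rintro ⟨k, hk⟩; refine ⟨σ k, (hmem (σ k)).mpr ?_⟩; rw [hσσ]; exact hk
  by_cases hSne : S.Nonempty
  · have hTne : T.Nonempty := hne.mpr hSne
    set M := S.max' hSne with hM
    have hMmem : M ∈ S := S.max'_mem hSne
    have hMle : ∀ k ∈ S, k ≤ M := fun k hk => S.le_max' k hk
    have haval : fwdPD x p = p - M := by
      unfold fwdPD; rw [dif_pos hSne]
    have hbval : fwdPD (swapSeq x i) p = p - T.max' hTne := by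
      unfold fwdPD; rw [dif_pos hTne]
    -- helper to compute T.max'
    have hTmax : ∀ m, m ∈ T → (∀ k ∈ T, k ≤ m) → T.max' hTne = m := by
      intro m hm hall
      exact le_antisymm (Finset.max'_le _ _ _ hall) (T.le_max' m hm)
    rcases eq_or_ne M i with hMi | hMi
    · -- M = i : i+1 ∉ S, T.max' = i+1
      right; left
      have hT1 : i+1 ∈ T := by
        rw [hmem]; rw [hσval]; simp only [if_neg (by omega : i+1 ≠ i), if_pos rfl]
        rw [← hMi]; exact hMmem
      have hTub : ∀ k ∈ T, k ≤ i+1 := by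
        intro k hk
        have := hMle (σ k) ((hmem k).mp hk)
        rw [hσval] at this; split_ifs at this <;> omega
      rw [haval, hbval, hTmax _ hT1 hTub, hMi]
      exact ⟨rfl, rfl⟩
    rcases eq_or_ne M (i+1) with hMi1 | hMi1
    · by_cases hiS : i ∈ S
      · -- M = i+1, i ∈ S: max T = i+1, unchanged
        left
        have hT1 : i+1 ∈ T := by
          rw [hmem, hσval]; simp only [if_neg (by omega : i+1 ≠ i), if_pos rfl]; exact hiS
        have hTub : ∀ k ∈ T, k ≤ i+1 := by
          intro k hk
          have := hMle (σ k) ((hmem k).mp hk)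
          rw [hσval] at this; split_ifs at this <;> omega
        rw [haval, hbval, hTmax _ hT1 hTub, hMi1]
      · -- M = i+1, i ∉ S: max T = i
        right; right
        have hT1 : i ∈ T := by
          rw [hmem, hσval]; simp only [if_pos rfl]; rw [← hMi1]; exact hMmem
        have hTub : ∀ k ∈ T, k ≤ i := by
          intro k hk
          have hs := (hmem k).mp hk
          have := hMle (σ k) hs
          rw [hσval] at this hs
          split_ifs at this hs with h1 h2
          · omega
          · exact absurd hs hiS
          · omega
        rw [haval, hbval, hTmax _ hT1 hTub, hMi1]
        exact ⟨rfl, rfl⟩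
    · -- M ∉ {i, i+1}: unchanged
      left
      have hMnotS : M ∈ T := by
        rw [hmem, hσval, if_neg hMi, if_neg hMi1]; exact hMmem
      have hle' : i ≤ M → i + 1 ≤ M := by omega
      have hTub : ∀ k ∈ T, k ≤ M := by
        intro k hk
        have hs := (hmem k).mp hk
        have h2 := hMle (σ k) hs
        rw [hσval] at h2
        split_ifs at h2 with h1 h3
        · -- k = i
          omega
        · -- k = i+1, σ k = i ≤ M, M ≠ i, M ≠ i+1
          omega
        · exact h2
      rw [haval, hbval, hTmax _ hMnotS hTub]
  · have hTne : ¬ T.Nonempty := fun h => hSne (hne.mp h)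
    left; unfold fwdPD; rw [dif_neg hTne, dif_neg hSne]

lemma isSeq_swap (n : ℕ) (x : ℕ → ℤ) (i : ℕ) (hx : IsSeq n x) (hi : 1 ≤ i)
    (hin : i + 1 ≤ n) : IsSeq n (swapSeq x i) := by
  rw [swapSeq_eq]
  intro u hu v hv huv
  simp only [Set.mem_Icc] at hu hv
  set σ := Equiv.swap i (i+1) with hσ
  have hσval : ∀ k, σ k = if k = i then i+1 else if k = i+1 then i else k := by
    intro k; rw [hσ, Equiv.swap_apply_def]
  have hmem : ∀ k, 1 ≤ k ∧ k ≤ n → σ k ∈ Set.Icc 1 n := by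
    intro k hk; rw [hσval]; simp only [Set.mem_Icc]; split_ifs <;> omega
  have := hx (hmem u hu) (hmem v hv) huv
  exact σ.injective this

noncomputable def Phi (n : ℕ) (P : Fin n → ℕ) : ℝ :=
  ∑ k : Fin n, Real.log (P k + 1)

lemma Phi_swap_bound (n : ℕ) (x : ℕ → ℤ) (i : ℕ) (hi : 1 ≤ i) (hin : i + 1 ≤ n) :
    |Phi n (PDvec n x) - Phi n (PDvec n (swapSeq x i))| ≤ 3 * Real.log (n + 1) := by
  set L := Real.log (n + 1) with hL
  have hL0 : 0 ≤ L := Real.log_nonneg (by push_cast; linarith)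
  set H : ℕ → ℝ := fun m => Real.log ((m - i : ℕ) + 1) with hH
  have hHmono : ∀ a b : ℕ, a ≤ b → H a ≤ H b := by
    intro a b hab
    apply Real.log_le_log (by positivity)
    have : (a - i : ℕ) ≤ (b - i : ℕ) := by omega
    push_cast
    exact_mod_cast add_le_add_left (Nat.cast_le.mpr this) 1
  -- generic bound on log of fwdPD values
  have hfb : ∀ (y : ℕ → ℤ) (p : ℕ), 1 ≤ p → p ≤ n →
      0 ≤ Real.log (fwdPD y p + 1) ∧ Real.log (fwdPD y p + 1) ≤ L := by
    intro y p hp1 hpn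
    constructor
    · apply Real.log_nonneg; push_cast; linarith
    · apply Real.log_le_log (by positivity)
      have := fwdPD_lt y p hp1
      have : (fwdPD y p : ℝ) ≤ n := by exact_mod_cast le_trans (by omega) hpn
      linarith
  have key : ∀ m ∈ Finset.range n,
      |Real.log (fwdPD x (m+1) + 1) - Real.log (fwdPD (swapSeq x i) (m+1) + 1)|
        ≤ (if m = i - 1 then L else 0) + (if m = i then L else 0) + (H (m+1) - H m) := by
    intro m hm
    simp only [Finset.mem_range] at hm
    have hHm : H m ≤ H (m+1) := hHmono m (m+1) (by omega)
    set p := m + 1 with hp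
    rcases lt_trichotomy p i with hlt | heq | hgt
    · rw [fwdPD_swap_left x i p hlt, sub_self, abs_zero]
      have h1 : (0:ℝ) ≤ if m = i - 1 then L else 0 := by split_ifs <;> simp [hL0]
      have h2 : (0:ℝ) ≤ if m = i then L else 0 := by split_ifs <;> simp [hL0]
      linarith
    · -- p = i, so m = i - 1
      have hm' : m = i - 1 := by omega
      rw [if_pos hm']
      have hb1 := hfb x p (by omega) (by omega)
      have hb2 := hfb (swapSeq x i) p (by omega) (by omega)
      have h2 : (0:ℝ) ≤ if m = i then L else 0 := by split_ifs <;> simp [hL0]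
      rw [abs_sub_le_iff]
      constructor <;> linarith
    · rcases eq_or_lt_of_le (Nat.succ_le_of_lt hgt) with heq1 | hgt1
      · -- p = i + 1, so m = i
        have hm' : m = i := by omega
        rw [if_pos hm']
        have hb1 := hfb x p (by omega) (by omega)
        have hb2 := hfb (swapSeq x i) p (by omega) (by omega)
        have h1 : (0:ℝ) ≤ if m = i - 1 then L else 0 := by split_ifs <;> simp [hL0]
        rw [abs_sub_le_iff]
        constructor <;> linarith
      · -- p > i + 1
        have h1 : (0:ℝ) ≤ if m = i - 1 then L else 0 := by split_ifs <;> simp [hL0]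
        have h2 : (0:ℝ) ≤ if m = i then L else 0 := by split_ifs <;> simp [hL0]
        have hHcomp : H (m+1) - H m
            = Real.log ((p - i : ℕ) + 1) - Real.log ((p - (i+1) : ℕ) + 1) := by
          simp only [hH]
          have h3 : (m - i : ℕ) = (p - (i+1) : ℕ) := by omega
          have h4 : (m + 1 - i : ℕ) = (p - i : ℕ) := by omega
          rw [h3, h4]
        have hlogle : Real.log ((p - (i+1) : ℕ) + 1) ≤ Real.log ((p - i : ℕ) + 1) := by
          apply Real.log_le_log (by positivity)
          have : (p - (i+1) : ℕ) ≤ (p - i : ℕ) := by omega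
          exact_mod_cast add_le_add_left (Nat.cast_le.mpr this) 1
        rcases fwdPD_swap_right x i p hi hgt1 with h | ⟨ha, hb⟩ | ⟨ha, hb⟩
        · rw [h, sub_self, abs_zero]; linarith
        · rw [ha, hb, hHcomp, abs_of_nonneg (by linarith)]; linarith
        · rw [ha, hb, hHcomp, abs_sub_comm, abs_of_nonneg (by linarith)]; linarith
  -- sum everything
  have hsum : Phi n (PDvec n x) - Phi n (PDvec n (swapSeq x i))
      = ∑ m ∈ Finset.range n,
        (Real.log (fwdPD x (m+1) + 1) - Real.log (fwdPD (swapSeq x i) (m+1) + 1)) := by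
    rw [Phi, Phi, ← Finset.sum_sub_distrib]
    rw [← Fin.sum_univ_eq_sum_range
      (fun m => Real.log (fwdPD x (m+1) + 1) - Real.log (fwdPD (swapSeq x i) (m+1) + 1)) n]
    rfl
  rw [hsum]
  calc |∑ m ∈ Finset.range n, (Real.log (fwdPD x (m+1) + 1)
          - Real.log (fwdPD (swapSeq x i) (m+1) + 1))|
      ≤ ∑ m ∈ Finset.range n, |Real.log (fwdPD x (m+1) + 1)
          - Real.log (fwdPD (swapSeq x i) (m+1) + 1)| := Finset.abs_sum_le_sum_abs _ _
    _ ≤ ∑ m ∈ Finset.range n, ((if m = i - 1 then L else 0) + (if m = i then L else 0)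
          + (H (m+1) - H m)) := Finset.sum_le_sum key
    _ ≤ 3 * L := by
        rw [Finset.sum_add_distrib, Finset.sum_add_distrib, Finset.sum_range_sub]
        have e1 : (∑ m ∈ Finset.range n, if m = i - 1 then L else 0) ≤ L := by
          rw [Finset.sum_ite_eq' (Finset.range n) (i-1) (fun _ => L)]
          split_ifs <;> simp [hL0]
        have e2 : (∑ m ∈ Finset.range n, if m = i then L else 0) ≤ L := by
          rw [Finset.sum_ite_eq' (Finset.range n) i (fun _ => L)]
          split_ifs <;> simp [hL0]
        have e3 : H n - H 0 ≤ L := by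
          have h0 : H 0 = 0 := by simp [hH]
          have hn : H n ≤ L := by
            rw [hH, hL]
            apply Real.log_le_log (by positivity)
            have : (n - i : ℕ) ≤ n := by omega
            push_cast
            exact_mod_cast add_le_add_left (Nat.cast_le.mpr this) 1
          linarith
        linarith

-- chain lemma for decreasing sequences
lemma dec_chain (n : ℕ) (x : ℕ → ℤ)
    (hdec : ∀ i, 1 ≤ i → i + 1 ≤ n → x (i+1) < x i) :
    ∀ j p, 1 ≤ j → j < p → p ≤ n → x p < x j := by
  have key : ∀ d j, 1 ≤ j → j + d + 1 ≤ n → x (j + d + 1) < x j := by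
    intro d
    induction d with
    | zero => intro j h1 h2; exact hdec j h1 h2
    | succ d ih =>
      intro j h1 h2
      have h3 : x (j + (d+1) + 1) < x (j+1) := by
        have := ih (j+1) (by omega) (by omega)
        convert this using 2
        omega
      exact lt_trans h3 (hdec j h1 (by omega))
  intro j p h1 h2 h3
  have : p = j + (p - j - 1) + 1 := by omega
  rw [this]
  exact key (p - j - 1) j h1 (by omega)

lemma PDvec_of_dec (n : ℕ) (x : ℕ → ℤ)
    (hdec : ∀ i, 1 ≤ i → i + 1 ≤ n → x (i+1) < x i) :
    PDvec n x = fun _ => 0 := by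
  funext k
  have hk : k.1 + 1 ≤ n := k.2
  show fwdPD x (k.1 + 1) = 0
  unfold fwdPD
  rw [dif_neg]
  rw [Finset.not_nonempty_iff_eq_empty, Finset.filter_eq_empty_iff]
  intro j hj
  simp only [Finset.mem_Ico] at hj
  exact not_lt.mpr (le_of_lt (dec_chain n x hdec j (k.1+1) hj.1 hj.2 hk))

def invCount (n : ℕ) (x : ℕ → ℤ) : ℕ :=
  ((Finset.Icc 1 n ×ˢ Finset.Icc 1 n).filter (fun q => q.1 < q.2 ∧ x q.1 < x q.2)).card

lemma invCount_swap_lt (n : ℕ) (x : ℕ → ℤ) (i : ℕ) (hi : 1 ≤ i) (hin : i + 1 ≤ n)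
    (hasc : x i < x (i+1)) : invCount n (swapSeq x i) < invCount n x := by
  classical
  set σ := Equiv.swap i (i+1) with hσdef
  have hσval : ∀ k, σ k = if k = i then i+1 else if k = i+1 then i else k := by
    intro k; rw [hσdef, Equiv.swap_apply_def]
  set A := (Finset.Icc 1 n ×ˢ Finset.Icc 1 n).filter (fun q => q.1 < q.2 ∧ x q.1 < x q.2)
    with hA
  set B := (Finset.Icc 1 n ×ˢ Finset.Icc 1 n).filter
    (fun q => q.1 < q.2 ∧ swapSeq x i q.1 < swapSeq x i q.2) with hB
  have hy : ∀ k, swapSeq x i k = x (σ k) := by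
    intro k; rw [swapSeq_eq]
  have hii1A : (i, i+1) ∈ A :=
    Finset.mem_filter.mpr ⟨Finset.mem_product.mpr ⟨Finset.mem_Icc.mpr ⟨hi, by omega⟩,
      Finset.mem_Icc.mpr ⟨by omega, hin⟩⟩, by omega, hasc⟩
  have hcard : B.card ≤ (A.erase (i, i+1)).card := by
    apply Finset.card_le_card_of_injOn (fun q => (σ q.1, σ q.2))
    · intro q hq
      simp only [hB, Finset.mem_coe, Finset.mem_filter, Finset.mem_product, Finset.mem_Icc] at hq
      obtain ⟨⟨⟨hq1, hq2⟩, hq3, hq4⟩, hlt, hval⟩ := hq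
      rw [hy, hy] at hval
      have hqne : ¬(q.1 = i ∧ q.2 = i + 1) := by
        rintro ⟨e1, e2⟩
        have s1 : σ q.1 = i + 1 := by rw [e1, hσval]; simp
        have s2 : σ q.2 = i := by rw [e2, hσval]; split_ifs <;> omega
        rw [s1, s2] at hval
        omega
      have hσlt : σ q.1 < σ q.2 := by
        rw [hσval, hσval]; split_ifs <;> omega
      apply Finset.mem_erase.mpr
      constructor
      · intro hcontra
        have e1 : σ q.1 = i := congrArg Prod.fst hcontra
        have e2 : σ q.2 = i + 1 := congrArg Prod.snd hcontra
        rw [hσval] at e1 e2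
        split_ifs at e1 e2 <;> omega
      · simp only [hA, Finset.mem_filter, Finset.mem_product, Finset.mem_Icc]
        refine ⟨⟨⟨?_, ?_⟩, ?_, ?_⟩, hσlt, hval⟩ <;> (rw [hσval]; split_ifs <;> omega)
    · intro q1 h1 q2 h2 heq
      have e1 : σ q1.1 = σ q2.1 := congrArg Prod.fst heq
      have e2 : σ q1.2 = σ q2.2 := congrArg Prod.snd heq
      have f1 := σ.injective e1
      have f2 := σ.injective e2
      exact Prod.ext f1 f2
  have hfin : (A.erase (i, i+1)).card < A.card := Finset.card_erase_lt_of_mem hii1A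
  show B.card < A.card
  omega

lemma exists_ascent (n : ℕ) (x : ℕ → ℤ) (hx : IsSeq n x) (h : invCount n x ≠ 0) :
    ∃ i, 1 ≤ i ∧ i + 1 ≤ n ∧ x i < x (i+1) := by
  by_contra hc
  push_neg at hc
  have hdec : ∀ i, 1 ≤ i → i + 1 ≤ n → x (i+1) < x i := by
    intro i h1 h2
    have hne : x (i+1) ≠ x i := by
      intro he
      have := hx (Set.mem_Icc.mpr ⟨by omega, h2⟩) (Set.mem_Icc.mpr ⟨h1, by omega⟩) he
      omega
    have := hc i h1 h2
    omega
  apply h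
  rw [invCount, Finset.card_eq_zero, Finset.filter_eq_empty_iff]
  rintro ⟨a, b⟩ hab
  simp only [Finset.mem_product, Finset.mem_Icc] at hab
  rintro ⟨hlt, hval⟩
  exact absurd hval (not_lt.mpr (le_of_lt (dec_chain n x hdec a b hab.1.1 hlt hab.2.2)))

-- reachability to the all-zero table
lemma reach_zero (n : ℕ) : ∀ m (x : ℕ → ℤ) (hx : IsSeq n x), invCount n x ≤ m →
    ∀ (v₀ : PDTables n), v₀.1 = (fun _ => 0) →
    (swapGraph n).Reachable ⟨PDvec n x, ⟨x, hx, rfl⟩⟩ v₀ := by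
  intro m
  induction m with
  | zero =>
    intro x hx hm v₀ hv₀
    have h0 : invCount n x = 0 := by omega
    have hdec : ∀ i, 1 ≤ i → i + 1 ≤ n → x (i+1) < x i := by
      intro i h1 h2
      have hne : x (i+1) ≠ x i := by
        intro he
        have := hx (Set.mem_Icc.mpr ⟨by omega, h2⟩) (Set.mem_Icc.mpr ⟨h1, by omega⟩) he
        omega
      rcases lt_or_gt_of_ne hne with h | h
      · exact h
      exfalso
      have : (i, i+1) ∈ (Finset.Icc 1 n ×ˢ Finset.Icc 1 n).filter
          (fun q => q.1 < q.2 ∧ x q.1 < x q.2) := by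
        simp only [Finset.mem_filter, Finset.mem_product, Finset.mem_Icc]
        exact ⟨⟨⟨by omega, by omega⟩, ⟨by omega, by omega⟩⟩, by omega, h⟩
      have := Finset.card_pos.mpr ⟨_, this⟩
      rw [invCount] at h0
      omega
    have hv : (⟨PDvec n x, ⟨x, hx, rfl⟩⟩ : PDTables n) = v₀ := by
      apply Subtype.ext
      show PDvec n x = v₀.1
      rw [PDvec_of_dec n x hdec, hv₀]
    rw [hv]
  | succ m ih =>
    intro x hx hm v₀ hv₀
    by_cases h0 : invCount n x = 0
    · exact ih x hx (by omega) v₀ hv₀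
    · obtain ⟨i, hi, hin, hasc⟩ := exists_ascent n x hx h0
      set y := swapSeq x i with hy
      have hys : IsSeq n y := isSeq_swap n x i hx hi hin
      have hlt : invCount n y < invCount n x := invCount_swap_lt n x i hi hin hasc
      have hreach : (swapGraph n).Reachable ⟨PDvec n y, ⟨y, hys, rfl⟩⟩ v₀ :=
        ih y hys (by omega) v₀ hv₀
      by_cases heq : PDvec n x = PDvec n y
      · have : (⟨PDvec n x, ⟨x, hx, rfl⟩⟩ : PDTables n) = ⟨PDvec n y, ⟨y, hys, rfl⟩⟩ :=
          Subtype.ext heq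
        rw [this]
        exact hreach
      · have hadj : (swapGraph n).Adj ⟨PDvec n x, ⟨x, hx, rfl⟩⟩ ⟨PDvec n y, ⟨y, hys, rfl⟩⟩ := by
          rw [swapGraph, SimpleGraph.fromRel_adj]
          constructor
          · intro h; exact heq (congrArg Subtype.val h)
          · left; exact ⟨x, i, hx, hi, hin, rfl, rfl⟩
        exact (hadj.reachable).trans hreach

-- Finiteness of the vertex set
lemma pdtables_finite (n : ℕ) : (PDTables n).Finite := by
  apply Set.Finite.subset (Set.Finite.pi (fun _ : Fin n => Set.finite_Iic n))
  rintro P ⟨x, hx, rfl⟩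
  intro k _
  have := fwdPD_lt x (k.1 + 1) (by omega)
  have hk := k.2
  simp only [Set.mem_Iic]
  show fwdPD x (k.1 + 1) ≤ n
  omega

-- the decreasing sequence
lemma isSeq_dec (n : ℕ) : IsSeq n (fun j => -(j:ℤ)) := by
  intro u _ v _ h
  simpa using h

lemma dec_hyp (n : ℕ) : ∀ i, 1 ≤ i → i + 1 ≤ n → (fun j => -(j:ℤ)) (i+1) < (fun j => -(j:ℤ)) i := by
  intro i _ _
  simp only
  push_cast
  linarith

lemma zero_mem (n : ℕ) : (fun _ => 0) ∈ PDTables n :=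
  ⟨fun j => -(j:ℤ), isSeq_dec n, PDvec_of_dec n _ (dec_hyp n)⟩

lemma Phi_zero (n : ℕ) : Phi n (fun _ => 0) = 0 := by
  unfold Phi
  simp

-- the increasing sequence
lemma isSeq_inc (n : ℕ) : IsSeq n (fun j => (j:ℤ)) := by
  intro u _ v _ h
  simpa using h

lemma fwdPD_inc (p : ℕ) (hp : 2 ≤ p) : fwdPD (fun j => (j:ℤ)) p = 1 := by
  unfold fwdPD
  have hfil : (Finset.Ico 1 p).filter (fun j : ℕ => ((j:ℤ) < (p:ℤ))) = Finset.Ico 1 p := by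
    apply Finset.filter_true_of_mem
    intro j hj
    simp only [Finset.mem_Ico] at hj
    exact_mod_cast hj.2
  rw [show (fun j => ((j:ℕ):ℤ)) p = (p:ℤ) from rfl] at *
  rw [hfil]
  have hne : (Finset.Ico 1 p).Nonempty := ⟨1, Finset.mem_Ico.mpr ⟨le_refl 1, by omega⟩⟩
  rw [dif_pos hne]
  have hmax : (Finset.Ico 1 p).max' hne = p - 1 := by
    apply le_antisymm
    · apply Finset.max'_le
      intro y hy
      simp only [Finset.mem_Ico] at hy
      omega
    · apply Finset.le_max'
      simp only [Finset.mem_Ico]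
      omega
  rw [hmax]
  omega

lemma fwdPD_one (x : ℕ → ℤ) : fwdPD x 1 = 0 := by
  unfold fwdPD
  rw [dif_neg]
  simp

lemma Phi_inc (n : ℕ) (hn : 1 ≤ n) :
    Phi n (PDvec n (fun j => (j:ℤ))) = (n:ℝ) * Real.log 2 - Real.log 2 := by
  unfold Phi
  have hterm : ∀ m ∈ Finset.range n,
      Real.log ((fwdPD (fun j => (j:ℤ)) (m+1) : ℝ) + 1)
        = Real.log 2 - (if m = 0 then Real.log 2 else 0) := by
    intro m hm
    rcases Nat.eq_zero_or_pos m with h0 | h1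
    · subst h0
      rw [fwdPD_one]
      simp
    · rw [fwdPD_inc (m+1) (by omega), if_neg (by omega)]
      norm_num
  have : (∑ k : Fin n, Real.log ((PDvec n (fun j => (j:ℤ))) k + 1))
      = ∑ m ∈ Finset.range n, Real.log ((fwdPD (fun j => (j:ℤ)) (m+1) : ℝ) + 1) := by
    rw [← Fin.sum_univ_eq_sum_range
      (fun m => Real.log ((fwdPD (fun j => (j:ℤ)) (m+1) : ℝ) + 1)) n]
    rfl
  rw [this, Finset.sum_congr rfl hterm, Finset.sum_sub_distrib, Finset.sum_const,
    Finset.sum_ite_eq' (Finset.range n) 0 (fun _ => Real.log 2),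
    if_pos (Finset.mem_range.mpr (by omega))]
  simp [nsmul_eq_mul]

-- walk bound
lemma walk_bound (n : ℕ) {u v : ↥(PDTables n)} (w : (swapGraph n).Walk u v) :
    |Phi n u.1 - Phi n v.1| ≤ (w.length : ℝ) * (3 * Real.log (n+1)) := by
  induction w with
  | nil => simp
  | @cons a b c h p ih =>
    have hL0 : 0 ≤ 3 * Real.log (n+1) := by
      have : (0:ℝ) ≤ Real.log (n+1) := Real.log_nonneg (by push_cast; linarith)
      linarith
    have hedge : |Phi n a.1 - Phi n b.1| ≤ 3 * Real.log (n+1) := by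
      rw [swapGraph, SimpleGraph.fromRel_adj] at h
      rcases h.2 with ⟨x, i, hx, hi, hin, h1, h2⟩ | ⟨x, i, hx, hi, hin, h1, h2⟩
      · rw [← h1, ← h2]; exact Phi_swap_bound n x i hi hin
      · rw [← h1, ← h2, abs_sub_comm]; exact Phi_swap_bound n x i hi hin
    have htri : |Phi n a.1 - Phi n c.1| ≤ |Phi n a.1 - Phi n b.1| + |Phi n b.1 - Phi n c.1| :=
      abs_sub_le _ _ _
    rw [SimpleGraph.Walk.length_cons]
    push_cast
    linarith


theorem stmt19 :
    ∃ c : ℝ, 0 < c ∧ ∃ N : ℕ, ∀ n : ℕ, N ≤ n →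
      c * n / Real.log n ≤ ((swapGraph n).diam : ℝ) := by
  refine ⟨Real.log 2 / 12, by positivity, 2, ?_⟩
  intro n hn
  haveI : Finite ↥(PDTables n) := (pdtables_finite n).to_subtype
  set v₀ : ↥(PDTables n) := ⟨fun _ => 0, zero_mem n⟩ with hv₀
  haveI : Nonempty ↥(PDTables n) := ⟨v₀⟩
  -- reachability of every vertex to v₀
  have reach_any : ∀ u : ↥(PDTables n), (swapGraph n).Reachable u v₀ := by
    rintro ⟨P, hP⟩
    obtain ⟨x, hx, hPx⟩ := hP
    have : (⟨P, ⟨x, hx, hPx⟩⟩ : ↥(PDTables n)) = ⟨PDvec n x, ⟨x, hx, rfl⟩⟩ :=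
      Subtype.ext hPx.symm
    rw [this]
    exact reach_zero n (invCount n x) x hx le_rfl v₀ rfl
  have hpre : (swapGraph n).Preconnected := by
    intro u v
    exact (reach_any u).trans (reach_any v).symm
  have hediam : (swapGraph n).ediam ≠ ⊤ := by
    obtain ⟨u, v, huv⟩ := SimpleGraph.exists_edist_eq_ediam_of_finite (G := swapGraph n)
    rw [← huv]
    exact SimpleGraph.edist_ne_top_iff_reachable.mpr (hpre u v)
  -- the two far-apart vertices
  set v₁ : ↥(PDTables n) := ⟨PDvec n (fun j => (j:ℤ)), ⟨_, isSeq_inc n, rfl⟩⟩ with hv₁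
  obtain ⟨w, hw⟩ := (hpre v₁ v₀).exists_walk_length_eq_dist
  have hwb := walk_bound n w
  rw [hw] at hwb
  have hPhi1 : Phi n v₁.1 = (n:ℝ) * Real.log 2 - Real.log 2 := Phi_inc n (by omega)
  have hPhi0 : Phi n v₀.1 = 0 := Phi_zero n
  rw [hPhi1, hPhi0, sub_zero] at hwb
  have hlog2 : (0:ℝ) < Real.log 2 := Real.log_pos (by norm_num)
  have hn2 : (2:ℝ) ≤ (n:ℝ) := by exact_mod_cast hn
  have habs : |(n:ℝ) * Real.log 2 - Real.log 2| = (n:ℝ) * Real.log 2 - Real.log 2 := by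
    apply abs_of_nonneg
    nlinarith
  rw [habs] at hwb
  have hdd : ((swapGraph n).dist v₁ v₀ : ℝ) ≤ ((swapGraph n).diam : ℝ) :=
    Nat.cast_le.mpr (SimpleGraph.dist_le_diam hediam)
  have hlogn : (0:ℝ) < Real.log n := Real.log_pos (by linarith)
  have hlogn1 : (0:ℝ) < Real.log (n+1) := Real.log_pos (by linarith)
  -- key numeric inequality: log(n+1) ≤ 2 log n and n ≤ 2(n-1)
  have hlognn : Real.log ((n:ℝ)+1) ≤ 2 * Real.log n := by
    have h1 : ((n:ℝ)+1) ≤ (n:ℝ)^2 := by nlinarith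
    calc Real.log ((n:ℝ)+1) ≤ Real.log ((n:ℝ)^2) := Real.log_le_log (by linarith) h1
      _ = 2 * Real.log n := by
          rw [Real.log_pow]
          norm_num
  -- conclude
  have hdiam : ((n:ℝ) * Real.log 2 - Real.log 2)
      ≤ ((swapGraph n).diam : ℝ) * (3 * Real.log ((n:ℝ)+1)) := by
    calc ((n:ℝ) * Real.log 2 - Real.log 2)
        ≤ ((swapGraph n).dist v₁ v₀ : ℝ) * (3 * Real.log ((n:ℝ)+1)) := hwb
      _ ≤ ((swapGraph n).diam : ℝ) * (3 * Real.log ((n:ℝ)+1)) := by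
          apply mul_le_mul_of_nonneg_right hdd
          linarith
  rw [div_le_iff₀ hlogn]
  have hdiam0 : (0:ℝ) ≤ ((swapGraph n).diam : ℝ) := Nat.cast_nonneg _
  nlinarith [hdiam, hlognn, hdd, mul_le_mul_of_nonneg_left hlognn hdiam0]
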